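/- Let f : ℝ → ℂ be a nonzero solution of -f'' + V·f = E·f with f(x+1) = C·f(x) for all x and some C ∈ ℂ with |C| ≠ 1. If V is continuous on ℝ, then f is not square-integrable on ℝ (indeed ∫_ℝ |f|² = ∞). -/

import Mathlib

open MeasureTheory Set Function

private lemma qp_pow {g : ℝ → ℂ} {D : ℂ} (hqp : ∀ x, g (x + 1) = D * g x) :
    ∀ (n : ℕ) (x : ℝ), g (x + n) = D ^ n * g x := by
  intro n
  induction n with
  | zero => simp
  | succ n ih =>
    intro x
    have h : (x : ℝ) + (n + 1 : ℕ) = (x + n) + 1 := by push_cast; ring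
    rw [h, hqp, ih, pow_succ]
    ring

private lemma shift_lintegral (F : ℝ → ENNReal) (a b c : ℝ) :
    ∫⁻ x in Set.Ioc (a + c) (b + c), F x = ∫⁻ x in Set.Ioc a b, F (x + c) := by
  have h := (measurePreserving_add_right (volume : Measure ℝ) c).setLIntegral_comp_preimage_emb
    (MeasurableEquiv.addRight c).measurableEmbedding F (Set.Ioc (a + c) (b + c))
  have hpre : (fun x : ℝ => x + c) ⁻¹' Set.Ioc (a + c) (b + c) = Set.Ioc a b := by
    ext x; simp [Set.mem_Ioc]
  rw [hpre] at h
  exact h.symm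

private lemma aux_growth (g : ℝ → ℂ) (hg : Continuous g) (D : ℂ) (hD : 1 < ‖D‖)
    (hqp : ∀ x, g (x + 1) = D * g x) (h0 : ∃ t, g t ≠ 0) :
    (∫⁻ x : ℝ, ‖g x‖₊ ^ 2) = ⊤ := by
  obtain ⟨t, ht⟩ := h0
  set F : ℝ → ENNReal := fun x => (‖g x‖₊ : ENNReal) ^ 2 with hF
  have hFmeas : Measurable F := (hg.nnnorm.measurable.coe_nnreal_ennreal).pow_const 2
  -- positivity of the base integral
  have hU : IsOpen {x : ℝ | g x ≠ 0} := isOpen_ne.preimage hg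
  have hOne : ({x : ℝ | g x ≠ 0} ∩ Set.Ioo t (t + 1)).Nonempty := by
    have htc : t ∈ closure (Set.Ioo t (t + 1)) := by
      rw [closure_Ioo (by linarith : t ≠ t + 1)]
      exact ⟨le_rfl, by linarith⟩
    exact mem_closure_iff_nhds.1 htc _ (hU.mem_nhds ht)
  have hcpos : 0 < ∫⁻ x in Set.Ioc t (t + 1), F x := by
    rw [lintegral_pos_iff_support hFmeas]
    have hsub : {x : ℝ | g x ≠ 0} ∩ Set.Ioo t (t + 1) ⊆
        Function.support F ∩ Set.Ioc t (t + 1) := by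
      rintro x ⟨hx1, hx2⟩
      refine ⟨?_, Set.Ioo_subset_Ioc_self hx2⟩
      simp only [hF, Function.mem_support, ne_eq, pow_eq_zero_iff, ENNReal.coe_eq_zero,
        nnnorm_eq_zero]
      simp_all
    have hpos : 0 < volume ({x : ℝ | g x ≠ 0} ∩ Set.Ioo t (t + 1)) :=
      (hU.inter isOpen_Ioo).measure_pos volume hOne
    have : (volume.restrict (Set.Ioc t (t + 1))) (Function.support F)
        = volume (Function.support F ∩ Set.Ioc t (t + 1)) :=
      Measure.restrict_apply' measurableSet_Ioc
    rw [this]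
    exact lt_of_lt_of_le hpos (measure_mono hsub)
  -- step: shifted intervals carry at least c
  have hstep : ∀ n : ℕ, (∫⁻ x in Set.Ioc t (t + 1), F x) ≤ ∫⁻ x in Set.Ioc (t + n) (t + n + 1), F x := by
    intro n
    have hbd : Set.Ioc (t + (n : ℝ)) (t + n + 1) = Set.Ioc (t + (n : ℝ)) ((t + 1) + n) := by
      ring_nf
    rw [hbd, shift_lintegral F t (t + 1) n]
    refine lintegral_mono fun x => ?_
    have h1 : ‖g x‖ ≤ ‖g (x + n)‖ := by
      rw [qp_pow hqp n x, norm_mul, norm_pow]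
      have h2 : (1 : ℝ) ≤ ‖D‖ ^ n := one_le_pow₀ hD.le
      nlinarith [norm_nonneg (g x)]
    have h3 : (‖g x‖₊ : ENNReal) ≤ (‖g (x + n)‖₊ : ENNReal) := by
      exact_mod_cast h1
    exact pow_le_pow_left' h3 2
  -- accumulate
  have hsum : ∀ N : ℕ, (N : ENNReal) * (∫⁻ x in Set.Ioc t (t + 1), F x)
      ≤ ∫⁻ x in Set.Ioc t (t + N), F x := by
    intro N
    induction N with
    | zero => simp
    | succ N ih =>
      have hbd : Set.Ioc t (t + (N + 1 : ℕ)) =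
          Set.Ioc t (t + N) ∪ Set.Ioc (t + N) (t + N + 1) := by
        rw [Set.Ioc_union_Ioc_eq_Ioc (by linarith [Nat.cast_nonneg (α := ℝ) N])
          (by linarith)]
        push_cast
        ring_nf
      rw [hbd, lintegral_union measurableSet_Ioc (Set.Ioc_disjoint_Ioc_of_le le_rfl)]
      push_cast
      rw [add_mul, one_mul]
      exact add_le_add ih (hstep N)
  have hle : ∀ N : ℕ, (N : ENNReal) * (∫⁻ x in Set.Ioc t (t + 1), F x) ≤ ∫⁻ x : ℝ, F x := fun N =>
    (hsum N).trans (setLIntegral_le_lintegral _ _)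
  by_contra hI
  have hI' : (∫⁻ x : ℝ, F x) ≠ ⊤ := hI
  obtain ⟨N, hN⟩ := ENNReal.exists_nat_gt (ENNReal.div_lt_top hI' hcpos.ne').ne
  have hlt : (∫⁻ x : ℝ, F x) < N * (∫⁻ x in Set.Ioc t (t + 1), F x) :=
    (ENNReal.div_lt_iff (Or.inl hcpos.ne') (Or.inr hI')).1 hN
  exact absurd (hle N) (not_le.2 hlt)

/-- A nonzero solution of `-f'' + V·f = E·f` with quasi-periodicity `f(x+1) = C·f(x)`
and `|C| ≠ 1` is not square-integrable on `ℝ`: the integral of `|f|²` over `ℝ` is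
infinite. -/
theorem quasiperiodic_not_square_integrable (V : ℝ → ℂ) (E C : ℂ) (f : ℝ → ℂ)
    (hV : Continuous V) (hVper : ∀ x, V (x + 1) = V x)
    (hC : ‖C‖ ≠ 1)
    (hf : Differentiable ℝ f) (hf' : Differentiable ℝ (deriv f))
    (hfeq : ∀ x, -(deriv (deriv f) x) + V x * f x = E * f x)
    (hfne : ∃ x, f x ≠ 0)
    (hqper : ∀ x, f (x + 1) = C * f x) :
    (∫⁻ x : ℝ, ‖f x‖₊ ^ 2) = ⊤ := by
  rcases lt_or_gt_of_ne hC with hlt | hgt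
  · -- ‖C‖ < 1
    by_cases hC0 : C = 0
    · -- ODE uniqueness forces f ≡ 0, contradiction
      exfalso
      obtain ⟨x₀, hx₀⟩ := hfne
      have hzero : ∀ y : ℝ, 1 ≤ y → f y = 0 := by
        intro y hy
        have h := hqper (y - 1)
        rw [sub_add_cancel] at h
        rw [h, hC0, zero_mul]
      have hx₀lt : x₀ < 1 := by
        by_contra h
        exact hx₀ (hzero x₀ (not_lt.1 h))
      -- bound on V
      have hper : Function.Periodic V 1 := hVper
      obtain ⟨M, hM⟩ := isBounded_iff_forall_norm_le.1
        (hper.isBounded_of_continuous one_ne_zero hV)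
      set K : NNReal := 1 ⊔ (M.toNNReal + ‖E‖₊) with hK
      set v : ℝ → ℂ × ℂ → ℂ × ℂ := fun tt p => (p.2, (V tt - E) * p.1) with hv
      have hlip : ∀ tt : ℝ, LipschitzWith K (v tt) := by
        intro tt
        have hb : ‖V tt - E‖₊ ≤ M.toNNReal + ‖E‖₊ := by
          have h1 : ‖V tt - E‖ ≤ M + ‖E‖ := by
            calc ‖V tt - E‖ ≤ ‖V tt‖ + ‖E‖ := norm_sub_le _ _
            _ ≤ M + ‖E‖ := by
              have := hM (V tt) ⟨tt, rfl⟩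
              linarith
          rw [← NNReal.coe_le_coe]
          push_cast
          rw [Real.coe_toNNReal']
          have h4 := le_max_left M 0
          have h4 := le_max_left M 0
          linarith
      -- second component Lipschitz
        have h2 : LipschitzWith (‖V tt - E‖₊ * 1) (fun p : ℂ × ℂ => (V tt - E) * p.1) := by
          have := (lipschitzWith_smul (β := ℂ) (V tt - E)).comp
            (LipschitzWith.prod_fst (α := ℂ) (β := ℂ))
          simpa [smul_eq_mul, Function.comp_def] using this
        have h1 : LipschitzWith 1 (fun p : ℂ × ℂ => p.2) := LipschitzWith.prod_snd
        have h3 := h1.prodMk h2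
        refine h3.weaken ?_
        simp only [mul_one, hK]
        exact sup_le_sup le_rfl hb
      set G : ℝ → ℂ × ℂ := fun x => (f x, deriv f x) with hG
      have hG' : ∀ tt : ℝ, HasDerivAt G (v tt (G tt)) tt := by
        intro tt
        have hd2 : deriv (deriv f) tt = (V tt - E) * f tt := by
          have h := hfeq tt
          ring_nf at h ⊢
          linear_combination -h
        have ha : HasDerivAt f (deriv f tt) tt := (hf tt).hasDerivAt
        have hb : HasDerivAt (deriv f) ((V tt - E) * f tt) tt := by
          rw [← hd2]; exact (hf' tt).hasDerivAt
        exact ha.prodMk hb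
      have hderiv2 : deriv f 2 = 0 := by
        have hev : f =ᶠ[nhds (2 : ℝ)] (fun _ => 0) := by
          filter_upwards [Ioi_mem_nhds (by norm_num : (1 : ℝ) < 2)] with y hy
          exact hzero y (le_of_lt hy)
        rw [hev.deriv_eq, deriv_const]
      have hG2 : G 2 = (0 : ℂ × ℂ) := by
        simp [hG, hzero 2 (by norm_num), hderiv2, Prod.ext_iff]
      have hzfun : ∀ tt : ℝ, HasDerivAt (fun _ : ℝ => (0 : ℂ × ℂ)) (v tt 0) tt := by
        intro tt
        have : v tt 0 = 0 := by simp [hv, Prod.ext_iff]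
        rw [this]
        exact hasDerivAt_const _ _
      have huniq := ODE_solution_unique_of_mem_Icc_left
        (v := v) (s := fun _ => Set.univ) (K := K)
        (fun tt _ => (hlip tt).lipschitzOnWith)
        (f := G) (g := fun _ => (0 : ℂ × ℂ)) (a := x₀) (b := 2)
        (ContinuousOn.mono ((hf.continuous.prodMk hf'.continuous).continuousOn) (Set.subset_univ _))
        (fun tt _ => (hG' tt).hasDerivWithinAt)
        (fun tt _ => Set.mem_univ _)
        (continuousOn_const)
        (fun tt _ => (hzfun tt).hasDerivWithinAt)
        (fun tt _ => Set.mem_univ _)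
        hG2
      have := huniq ⟨le_rfl, by linarith⟩
      have : f x₀ = 0 := congrArg Prod.fst this
      exact hx₀ this
    · -- 0 < ‖C‖ < 1 : reflect
      set g : ℝ → ℂ := fun x => f (-x) with hg
      have hD : 1 < ‖C⁻¹‖ := by
        rw [norm_inv]
        rw [one_lt_inv_iff₀]
        exact ⟨norm_pos_iff.2 hC0, hlt⟩
      have hqp : ∀ x, g (x + 1) = C⁻¹ * g x := by
        intro x
        have h := hqper (-(x + 1))
        have h2 : -(x + 1) + 1 = -x := by ring
        rw [h2] at h
        simp only [hg]
        rw [h]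
        field_simp
      have hne : ∃ x, g x ≠ 0 := by
        obtain ⟨x, hx⟩ := hfne
        refine ⟨-x, ?_⟩
        simp only [hg, neg_neg]
        exact hx
      have hmain := aux_growth g (hf.continuous.comp continuous_neg) C⁻¹ hD hqp hne
      have htrans : (∫⁻ x : ℝ, (‖g x‖₊ : ENNReal) ^ 2) = ∫⁻ x : ℝ, (‖f x‖₊ : ENNReal) ^ 2 := by
        have := (Measure.measurePreserving_neg (volume : Measure ℝ)).lintegral_comp_emb
          (MeasurableEquiv.neg ℝ).measurableEmbedding
          (fun x => (‖f x‖₊ : ENNReal) ^ 2)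
        exact this
      rw [← htrans]
      exact hmain
  · exact aux_growth f hf.continuous C hgt hqper hfne
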